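/- Let α ∈ (0,2) and t > 0, and let μ be a Borel probability measure on ℝ with μ((−∞,0]) = 0 such that ∫ e^{−u·s} μ(ds) = exp( −2^{(α−2)/2}·u^{α/2}·t ) for every u > 0. Then for every r > 0 the integral ∫ s^{−r} μ(ds) is finite and equals (2·Γ(2r/α)/(α·Γ(r)))·2^{(2−α)r/α}·t^{−2r/α}. In particular, for each r > 0 there is a constant C depending only on r such that ∫ s^{−r} μ(ds) ≤ C·t^{−2r/α} for all α ∈ (1,2) and t > 0. -/

import Mathlib

open Real MeasureTheory

open Set


lemma auxInt {p q b : ℝ} (hp : 0 < p) (hq : -1 < q) (hb : 0 < b) :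
    IntegrableOn (fun x : ℝ => x ^ q * Real.exp (-b * x ^ p)) (Set.Ioi 0) := by
  have hq' : -1 < (q + 1 - p) / p := by
    rw [lt_div_iff₀ hp]; linarith
  have h1 : IntegrableOn (fun y : ℝ => y ^ ((q + 1 - p) / p) * Real.exp (-b * y))
      (Set.Ioi 0) := by
    have h0 := integrableOn_rpow_mul_exp_neg_mul_rpow hq' (zero_lt_one' ℝ) hb
    refine (integrableOn_congr_fun (fun x hx => ?_) measurableSet_Ioi).mp h0
    rw [Real.rpow_one]
  have h2 := (integrableOn_Ioi_comp_rpow_iff'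
    (fun y => y ^ ((q + 1 - p) / p) * Real.exp (-b * y)) hp.ne').mpr h1
  refine (integrableOn_congr_fun (fun x hx => ?_) measurableSet_Ioi).mp h2
  have hx0 : (0:ℝ) < x := hx
  have he : p * ((q + 1 - p) / p) = q + 1 - p := by field_simp
  rw [smul_eq_mul, ← Real.rpow_mul hx0.le, he, ← mul_assoc, ← Real.rpow_add hx0]
  ring_nf

lemma mainCalc {α t : ℝ} (hα : α ∈ Set.Ioo (0:ℝ) 2) (ht : 0 < t)
    (μ : Measure ℝ) [IsProbabilityMeasure μ] (hμ0 : μ (Set.Iic 0) = 0)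
    (hL : ∀ u : ℝ, 0 < u → (∫ s, Real.exp (-(u * s)) ∂μ)
        = Real.exp (-((2:ℝ) ^ ((α - 2)/2) * u ^ (α/2) * t)))
    {r : ℝ} (hr : 0 < r) :
    Integrable (fun s : ℝ => s ^ (-r)) μ ∧
    (∫ s, s ^ (-r) ∂μ) = (2 * Real.Gamma (2*r/α) / (α * Real.Gamma r)) *
        (2:ℝ) ^ ((2-α)*r/α) * t ^ (-(2*r/α)) := by
  obtain ⟨hα0, hα2⟩ := hα
  set c : ℝ := (2:ℝ) ^ ((α - 2)/2) with hc_def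
  have hc : 0 < c := Real.rpow_pos_of_pos two_pos _
  have hp : 0 < α / 2 := by linarith
  have hb : 0 < c * t := mul_pos hc ht
  have hΓr : 0 < Real.Gamma r := Real.Gamma_pos_of_pos hr
  have hpos : ∀ᵐ s ∂μ, 0 < s := by
    rw [ae_iff]
    convert hμ0 using 2
    ext s; simp [not_lt]
  -- Mellin identity for each s > 0
  have hMel : ∀ s : ℝ, 0 < s →
      ∫⁻ u in Set.Ioi (0:ℝ), ENNReal.ofReal (u ^ (r-1) * Real.exp (-(u * s)))
        = ENNReal.ofReal (Real.Gamma r * s ^ (-r)) := by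
    intro s hs
    have hint : IntegrableOn (fun u : ℝ => u ^ (r-1) * Real.exp (-(u*s))) (Set.Ioi 0) := by
      have h0 := auxInt one_pos (by linarith : (-1:ℝ) < r - 1) hs
      refine (integrableOn_congr_fun (fun u hu => ?_) measurableSet_Ioi).mp h0
      simp only [Real.rpow_one]; ring_nf
    have hval : ∫ u in Set.Ioi (0:ℝ), u ^ (r-1) * Real.exp (-(u*s))
        = Real.Gamma r * s ^ (-r) := by
      have h0 := integral_rpow_mul_exp_neg_mul_rpow one_pos
        (by linarith : (-1:ℝ) < r - 1) hs
      rw [setIntegral_congr_fun measurableSet_Ioi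
        (fun u hu => by simp only [Real.rpow_one]; ring_nf :
          Set.EqOn (fun u : ℝ => u ^ (r-1) * Real.exp (-(u*s)))
            (fun u : ℝ => u ^ (r-1) * Real.exp (-s * u ^ (1:ℝ))) (Set.Ioi 0)), h0]
      have : r - 1 + 1 = r := by ring
      rw [this]
      norm_num [mul_comm]
    rw [← ofReal_integral_eq_lintegral_ofReal hint
      ((ae_restrict_iff' measurableSet_Ioi).mpr (Filter.Eventually.of_forall
        (fun u hu => by have hu0 : (0:ℝ) < u := hu; positivity))), hval]
  -- Laplace transform as lintegral
  have hLap : ∀ u : ℝ, 0 < u →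
      ∫⁻ s, ENNReal.ofReal (Real.exp (-(u * s))) ∂μ
        = ENNReal.ofReal (Real.exp (-(c * u ^ (α/2) * t))) := by
    intro u hu
    have hm : AEStronglyMeasurable (fun s : ℝ => Real.exp (-(u*s))) μ :=
      (Real.continuous_exp.comp (continuous_const.mul continuous_id).neg).aestronglyMeasurable
    have hIexp : Integrable (fun s : ℝ => Real.exp (-(u*s))) μ := by
      refine Integrable.mono' (integrable_const 1) hm ?_
      filter_upwards [hpos] with s hs
      rw [Real.norm_eq_abs, Real.abs_exp]
      exact Real.exp_le_one_iff.mpr (by nlinarith)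
    rw [← ofReal_integral_eq_lintegral_ofReal hIexp
      (Filter.Eventually.of_forall fun s => (Real.exp_pos _).le), hL u hu]
  have hmeas : Measurable (Function.uncurry fun (s u : ℝ) =>
      ENNReal.ofReal (u ^ (r-1) * Real.exp (-(u*s)))) := by
    apply Measurable.ennreal_ofReal
    fun_prop
  set V : ℝ := (c*t) ^ (-(2*r/α)) * (2/α) * Real.Gamma (2*r/α) with hV_def
  have hΓ2 : 0 < Real.Gamma (2*r/α) := Real.Gamma_pos_of_pos (by positivity)
  have hV_nonneg : 0 ≤ V := by positivity
  have hαne : α ≠ 0 := hα0.ne'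
  have key : ∫⁻ s, ENNReal.ofReal (Real.Gamma r * s ^ (-r)) ∂μ = ENNReal.ofReal V := by
    calc ∫⁻ s, ENNReal.ofReal (Real.Gamma r * s ^ (-r)) ∂μ
        = ∫⁻ s, (∫⁻ u in Set.Ioi (0:ℝ),
            ENNReal.ofReal (u ^ (r-1) * Real.exp (-(u*s)))) ∂μ := by
          refine lintegral_congr_ae ?_
          filter_upwards [hpos] with s hs
          exact (hMel s hs).symm
      _ = ∫⁻ u in Set.Ioi (0:ℝ), (∫⁻ s,
            ENNReal.ofReal (u ^ (r-1) * Real.exp (-(u*s))) ∂μ) := by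
          exact lintegral_lintegral_swap hmeas.aemeasurable
      _ = ∫⁻ u in Set.Ioi (0:ℝ),
            ENNReal.ofReal (u ^ (r-1) * Real.exp (-(c*t) * u ^ (α/2))) := by
          refine setLIntegral_congr_fun measurableSet_Ioi
            (fun u hu => ?_)
          have hu0 : (0:ℝ) < u := hu
          simp_rw [ENNReal.ofReal_mul (Real.rpow_nonneg hu0.le _)]
          rw [lintegral_const_mul' _ _ ENNReal.ofReal_ne_top, hLap u hu0]
          congr 2
          rw [neg_mul]
          ring_nf
      _ = ENNReal.ofReal (∫ u in Set.Ioi (0:ℝ),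
            u ^ (r-1) * Real.exp (-(c*t) * u ^ (α/2))) := by
          rw [← ofReal_integral_eq_lintegral_ofReal
            (auxInt hp (by linarith : (-1:ℝ) < r - 1) hb)
            ((ae_restrict_iff' measurableSet_Ioi).mpr (Filter.Eventually.of_forall
              (fun u hu => by have hu0 : (0:ℝ) < u := hu; positivity)))]
      _ = ENNReal.ofReal V := by
          rw [integral_rpow_mul_exp_neg_mul_rpow hp
            (by linarith : (-1:ℝ) < r - 1) hb]
          congr 1
          rw [hV_def]
          have h1 : r - 1 + 1 = r := by ring
          rw [h1]
          have h2 : -r / (α/2) = -(2*r/α) := by rw [div_div_eq_mul_div]; ring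
          have h3 : r / (α/2) = 2*r/α := by rw [div_div_eq_mul_div]; ring
          have h4 : (1:ℝ) / (α/2) = 2/α := by rw [div_div_eq_mul_div]; ring
          rw [h2, h3, h4]
  have hg_meas : AEStronglyMeasurable (fun s : ℝ => Real.Gamma r * s ^ (-r)) μ :=
    (show Measurable (fun s : ℝ => Real.Gamma r * s ^ (-r)) by
      measurability).aestronglyMeasurable
  have hg_nn : 0 ≤ᵐ[μ] fun s : ℝ => Real.Gamma r * s ^ (-r) := by
    filter_upwards [hpos] with s hs
    positivity
  have hg_int : Integrable (fun s : ℝ => Real.Gamma r * s ^ (-r)) μ := by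
    refine ⟨hg_meas, ?_⟩
    rw [hasFiniteIntegral_iff_ofReal hg_nn, key]
    exact ENNReal.ofReal_lt_top
  have hg_val : ∫ s, Real.Gamma r * s ^ (-r) ∂μ = V := by
    rw [integral_eq_lintegral_of_nonneg_ae hg_nn hg_meas, key,
      ENNReal.toReal_ofReal hV_nonneg]
  have hf_int : Integrable (fun s : ℝ => s ^ (-r)) μ := by
    have h1 := hg_int.const_mul (Real.Gamma r)⁻¹
    refine h1.congr (Filter.Eventually.of_forall fun s => ?_)
    simp [inv_mul_cancel_left₀ hΓr.ne']
  refine ⟨hf_int, ?_⟩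
  have hgi : ∫ s, Real.Gamma r * s ^ (-r) ∂μ = Real.Gamma r * ∫ s, s ^ (-r) ∂μ :=
    integral_const_mul _ _
  have hf_val : ∫ s, s ^ (-r) ∂μ = V / Real.Gamma r := by
    rw [hgi] at hg_val
    field_simp at hg_val ⊢
    linarith [hg_val]
  rw [hf_val, hV_def]
  have hct : (c*t) ^ (-(2*r/α)) = c ^ (-(2*r/α)) * t ^ (-(2*r/α)) :=
    Real.mul_rpow hc.le ht.le
  have hc2 : c ^ (-(2*r/α)) = (2:ℝ) ^ ((2-α)*r/α) := by
    rw [hc_def, ← Real.rpow_mul (by norm_num : (0:ℝ) ≤ 2)]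
    congr 1
    field_simp
    ring
  rw [hct, hc2]
  field_simp

theorem stmt9 :
    (∀ α ∈ Set.Ioo (0 : ℝ) 2, ∀ t : ℝ, 0 < t →
      ∀ μ : Measure ℝ, IsProbabilityMeasure μ → μ (Set.Iic 0) = 0 →
      (∀ u : ℝ, 0 < u →
        (∫ s, Real.exp (-(u * s)) ∂μ)
          = Real.exp (-((2 : ℝ) ^ ((α - 2)/2) * u ^ (α/2) * t))) →
      ∀ r : ℝ, 0 < r →
        Integrable (fun s : ℝ => s ^ (-r)) μ ∧
        (∫ s, s ^ (-r) ∂μ)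
          = (2 * Real.Gamma (2 * r / α) / (α * Real.Gamma r)) *
              (2 : ℝ) ^ ((2 - α) * r / α) * t ^ (-(2 * r / α))) ∧
    (∀ r : ℝ, 0 < r → ∃ C > 0, ∀ α ∈ Set.Ioo (1 : ℝ) 2, ∀ t : ℝ, 0 < t →
      ∀ μ : Measure ℝ, IsProbabilityMeasure μ → μ (Set.Iic 0) = 0 →
      (∀ u : ℝ, 0 < u →
        (∫ s, Real.exp (-(u * s)) ∂μ)
          = Real.exp (-((2 : ℝ) ^ ((α - 2)/2) * u ^ (α/2) * t))) →
      (∫ s, s ^ (-r) ∂μ) ≤ C * t ^ (-(2 * r / α))) := by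
  constructor
  · intro α hα t ht μ hμ hμ0 hL r hr
    haveI := hμ
    exact mainCalc hα ht μ hμ0 hL hr
  · intro r hr
    have hΓr : 0 < Real.Gamma r := Real.Gamma_pos_of_pos hr
    obtain ⟨M, hM⟩ := (isCompact_Icc (a := r) (b := 2*r)).exists_bound_of_continuousOn
      (f := Real.Gamma) (fun x hx => by
        have hx0 : 0 < x := lt_of_lt_of_le hr hx.1
        exact (Real.differentiableAt_Gamma (fun m => by
          have : (0:ℝ) ≤ m := Nat.cast_nonneg m
          intro h; rw [h] at hx0; linarith)).continuousAt.continuousWithinAt)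
    set M' : ℝ := max M 1 with hM'_def
    have hM'pos : 0 < M' := lt_of_lt_of_le one_pos (le_max_right M 1)
    refine ⟨(2 * M' / Real.Gamma r) * 2 ^ r, by positivity, ?_⟩
    intro α hα t ht μ hμ hμ0 hL
    haveI := hμ
    have hα1 : (1:ℝ) < α := hα.1
    have hα2 : α < 2 := hα.2
    have hα0 : (0:ℝ) < α := by linarith
    have h := (mainCalc ⟨hα0, hα2⟩ ht μ hμ0 hL hr).2
    rw [h]
    have hmem : 2*r/α ∈ Set.Icc r (2*r) := by
      constructor
      · rw [le_div_iff₀ hα0]; nlinarith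
      · rw [div_le_iff₀ hα0]; nlinarith
    have hΓle : Real.Gamma (2*r/α) ≤ M' :=
      le_trans (le_trans (le_abs_self _) (hM _ hmem)) (le_max_left M 1)
    have hΓ2 : 0 < Real.Gamma (2*r/α) := Real.Gamma_pos_of_pos (by positivity)
    have h1 : 2 * Real.Gamma (2*r/α) / (α * Real.Gamma r) ≤ 2 * M' / Real.Gamma r := by
      rw [div_le_div_iff₀ (by positivity) (by positivity)]
      nlinarith [mul_nonneg (mul_nonneg (by linarith : (0:ℝ) ≤ α - 1) hM'pos.le) hΓr.le,
        mul_le_mul_of_nonneg_right hΓle hΓr.le]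
    have h2 : (2:ℝ) ^ ((2-α)*r/α) ≤ (2:ℝ) ^ r := by
      apply Real.rpow_le_rpow_of_exponent_le one_le_two
      rw [div_le_iff₀ hα0]
      nlinarith
    have ht' : 0 ≤ t ^ (-(2*r/α)) := Real.rpow_nonneg ht.le _
    apply mul_le_mul_of_nonneg_right _ ht'
    exact mul_le_mul h1 h2 (by positivity) (by positivity)
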